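/- Fix $d > 0$ and $E_{\max} > d^2$. The function $g(E) = \max\{\, d - \sqrt{E},\ \frac{E - d^2}{\sqrt{E_{\max}} + d} \,\}$ is convex on $[0, E_{\max}]$ and satisfies $g(E) \le |\sqrt{E} - d|$ for all $E \in [0, E_{\max}]$, with equality on $[0, d^2]$ and at $E = E_{\max}$. -/

import Mathlib

/-- g(E) = max{d - √E, (E - d²)/(√E_max + d)} is convex on [0, E_max],
underestimates |√E - d| there, with equality on [0, d²] and at E_max. -/
theorem stmt_16 (d Emax : ℝ) (hd : 0 < d) (hEmax : d ^ 2 < Emax) :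
    (let g : ℝ → ℝ := fun E => max (d - Real.sqrt E) ((E - d ^ 2) / (Real.sqrt Emax + d))
     ConvexOn ℝ (Set.Icc 0 Emax) g ∧
     (∀ E ∈ Set.Icc (0 : ℝ) Emax, g E ≤ |Real.sqrt E - d|) ∧
     (∀ E ∈ Set.Icc (0 : ℝ) (d ^ 2), g E = |Real.sqrt E - d|) ∧
     g Emax = |Real.sqrt Emax - d|) := by
  intro g
  have hEmax0 : (0:ℝ) ≤ Emax := le_of_lt (lt_of_le_of_lt (by positivity) hEmax)
  have hden : 0 < Real.sqrt Emax + d := by positivity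
  have hsqEmax : d < Real.sqrt Emax := by
    have := Real.sqrt_lt_sqrt (by positivity) hEmax
    rwa [Real.sqrt_sq hd.le] at this
  have hfactor : ∀ E : ℝ, 0 ≤ E →
      E - d ^ 2 = (Real.sqrt E - d) * (Real.sqrt E + d) := by
    intro E hE
    nlinarith [Real.sq_sqrt hE]
  have hconv : ConvexOn ℝ (Set.Icc 0 Emax) g := by
    apply ConvexOn.sup
    · have h1 : ConcaveOn ℝ (Set.Icc (0:ℝ) Emax) Real.sqrt :=
        Real.strictConcaveOn_sqrt.concaveOn.subset (Set.Icc_subset_Ici_self)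
          (convex_Icc 0 Emax)
      have h3 : ConvexOn ℝ (Set.Icc (0:ℝ) Emax) (fun _ => d) :=
        convexOn_const d (convex_Icc 0 Emax)
      have h4 := h3.add h1.neg
      simp only [sub_eq_add_neg]
      exact h4
    · have haff : ConvexOn ℝ (Set.Icc (0:ℝ) Emax) (fun E => E - d ^ 2) :=
        (convexOn_id (convex_Icc 0 Emax)).sub (concaveOn_const _ (convex_Icc 0 Emax))
      have := haff.smul (c := (Real.sqrt Emax + d)⁻¹) (by positivity)
      refine this.congr (fun E _ => ?_)
      simp only [smul_eq_mul, div_eq_inv_mul]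
  have hle : ∀ E ∈ Set.Icc (0:ℝ) Emax, g E ≤ |Real.sqrt E - d| := by
    intro E hE
    obtain ⟨hE0, hE1⟩ := hE
    have hs : 0 ≤ Real.sqrt E := Real.sqrt_nonneg E
    apply max_le
    · have : d - Real.sqrt E ≤ |d - Real.sqrt E| := le_abs_self _
      rwa [abs_sub_comm] at this
    · rw [hfactor E hE0, div_le_iff₀ hden]
      have hsE : Real.sqrt E ≤ Real.sqrt Emax := Real.sqrt_le_sqrt hE1
      rcases le_or_gt d (Real.sqrt E) with h | h
      · rw [abs_of_nonneg (by linarith)]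
        nlinarith
      · rw [abs_of_neg (by linarith)]
        nlinarith
  refine ⟨hconv, hle, ?_, ?_⟩
  · intro E hE
    obtain ⟨hE0, hE1⟩ := hE
    have hsd : Real.sqrt E ≤ d := by
      have := Real.sqrt_le_sqrt hE1
      rwa [Real.sqrt_sq hd.le] at this
    have h1 : (E - d ^ 2) / (Real.sqrt Emax + d) ≤ d - Real.sqrt E := by
      apply le_trans (div_nonpos_of_nonpos_of_nonneg (by linarith) hden.le)
      linarith
    show max _ _ = _
    rw [max_eq_left h1, abs_of_nonpos (by linarith), neg_sub]
  · have h2 : (Emax - d ^ 2) / (Real.sqrt Emax + d) = Real.sqrt Emax - d := by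
      rw [hfactor Emax hEmax0, mul_div_assoc, div_self hden.ne', mul_one]
    show max _ _ = _
    rw [h2, max_eq_right (by linarith), abs_of_pos (by linarith)]
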